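/- Let P be a finite connected poset with at least two points and C = {a,b,v,w} a fixed 4-crown (with minimal points a,b and maximal points v,w, not necessarily a subposet of P). There exists a surjective order homomorphism f : P → C if and only if there exist a partition L(P) = A ⊔ B into two nonempty sets and a partition U(P) = V ⊔ W into two nonempty sets such that no four-element subset F of E(P) meeting all four of A, B, V, W is an improper 4-crown in E(P). -/

import Mathlib

def ConnectedPoset (α : Type*) [PartialOrder α] : Prop :=
  ∀ a b : α, Relation.ReflTransGen (fun u v : α => u ≤ v ∨ v ≤ u) a b

/-- The set of extremal points of a poset. -/
def EP (α : Type*) [PartialOrder α] : Set α := {z | IsMin z ∨ IsMax z}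

/-- `{a,b,v,w}` is a 4-crown: exactly the strict comparabilities
`a<v, a<w, b<v, b<w`. -/
def Is4Crown {β : Type*} [PartialOrder β] (a b v w : β) : Prop :=
  a < v ∧ a < w ∧ b < v ∧ b < w ∧ ¬ a ≤ b ∧ ¬ b ≤ a ∧ ¬ v ≤ w ∧ ¬ w ≤ v

/-- `{a,b,v,w}` is an improper 4-crown in `E(P)`: `a,b` are (distinct) minimal
points, `v,w` (distinct) maximal points, with `a,b < v,w`, and there is a
point `m` with `a,b < m < v,w`. -/
def IsImproper4CrownE {α : Type*} [PartialOrder α] (a b v w : α) : Prop :=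
  IsMin a ∧ IsMin b ∧ a ≠ b ∧ IsMax v ∧ IsMax w ∧ v ≠ w ∧
  a < v ∧ a < w ∧ b < v ∧ b < w ∧
  ∃ m : α, a < m ∧ b < m ∧ m < v ∧ m < w

lemma exists_isMin_le {α : Type*} [PartialOrder α] [Finite α] (x : α) :
    ∃ z : α, IsMin z ∧ z ≤ x := by
  obtain ⟨z, hz, hmin⟩ := Finite.exists_le_minimal (p := fun _ : α => True) (a := x) trivial
  exact ⟨z, fun c hc => hmin.2 trivial hc, hz⟩

lemma exists_le_isMax {α : Type*} [PartialOrder α] [Finite α] (x : α) :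
    ∃ z : α, IsMax z ∧ x ≤ z := by
  obtain ⟨z, hz, hmax⟩ := Finite.exists_le_maximal (p := fun _ : α => True) (a := x) trivial
  exact ⟨z, fun c hc => hmax.2 trivial hc, hz⟩

lemma no_isolated {α : Type*} [PartialOrder α] (hconn : ConnectedPoset α)
    (htwo : ∃ x y : α, x ≠ y) {z : α} (hmin : IsMin z) (hmax : IsMax z) : False := by
  obtain ⟨x, y, hxy⟩ := htwo
  have hfix : ∀ t : α, Relation.ReflTransGen (fun u v : α => u ≤ v ∨ v ≤ u) z t → t = z := by
    intro t h
    induction h with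
    | refl => rfl
    | tail _ hbc ih =>
      subst ih
      rcases hbc with h | h
      · exact le_antisymm (hmax h) h
      · exact le_antisymm h (hmin h)
  exact hxy ((hfix x (hconn z x)).trans (hfix y (hconn z y)).symm)

lemma ncard_four {α : Type*} (a b c d : α) (hab : a ≠ b) (hac : a ≠ c) (had : a ≠ d)
    (hbc : b ≠ c) (hbd : b ≠ d) (hcd : c ≠ d) : ({a, b, c, d} : Set α).ncard = 4 := by
  rw [Set.ncard_insert_of_notMem (by simp [hab, hac, had])
      ((Set.finite_singleton d).insert c |>.insert b),
    Set.ncard_insert_of_notMem (by simp [hbc, hbd]) ((Set.finite_singleton d).insert c),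
    Set.ncard_insert_of_notMem (by simp [hcd]) (Set.finite_singleton d),
    Set.ncard_singleton]

/-- existence of a surjective homomorphism from `P` onto a fixed
4-crown `C = {a,b,v,w}` is equivalent to the existence of partitions
`L(P) = A ⊔ B`, `U(P) = V ⊔ W` into nonempty sets such that no four-element
subset of `E(P)` meeting all of `A,B,V,W` is an improper 4-crown in `E(P)`. -/
theorem stmt7 {α γ : Type*} [PartialOrder α] [PartialOrder γ] [Fintype α] [Fintype γ]
    (hconn : ConnectedPoset α) (htwo : ∃ x y : α, x ≠ y)
    (a b v w : γ) (hcrown : Is4Crown a b v w)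
    (hcarrier : ∀ z : γ, z = a ∨ z = b ∨ z = v ∨ z = w) :
    (∃ f : α → γ, Monotone f ∧ Function.Surjective f) ↔
    ∃ A B V W : Set α,
      A.Nonempty ∧ B.Nonempty ∧ V.Nonempty ∧ W.Nonempty ∧
      A ∪ B = {z : α | IsMin z} ∧ Disjoint A B ∧
      V ∪ W = {z : α | IsMax z} ∧ Disjoint V W ∧
      ∀ F : Set α, F ⊆ EP α → F.ncard = 4 →
        (F ∩ A).Nonempty → (F ∩ B).Nonempty → (F ∩ V).Nonempty → (F ∩ W).Nonempty →
        ¬ ∃ a' b' v' w' : α, F = {a', b', v', w'} ∧ IsImproper4CrownE a' b' v' w' := by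
  classical
  obtain ⟨hav, haw, hbv, hbw, hnab, hnba, hnvw, hnwv⟩ := hcrown
  have hnva : ¬ v ≤ a := fun h => absurd (h.trans_lt hav) (lt_irrefl v)
  have hnwa : ¬ w ≤ a := fun h => absurd (h.trans_lt haw) (lt_irrefl w)
  have hnvb : ¬ v ≤ b := fun h => absurd (h.trans_lt hbv) (lt_irrefl v)
  have hnwb : ¬ w ≤ b := fun h => absurd (h.trans_lt hbw) (lt_irrefl w)
  constructor
  · -- forward direction
    rintro ⟨f, hf, hsurj⟩
    set A : Set α := {z : α | IsMin z ∧ (f z = a ∨ f z = v)} with hAdef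
    set B : Set α := {z : α | IsMin z ∧ (f z = b ∨ f z = w)} with hBdef
    set V : Set α := {z : α | IsMax z ∧ (f z = v ∨ f z = a)} with hVdef
    set W : Set α := {z : α | IsMax z ∧ (f z = w ∨ f z = b)} with hWdef
    have hABd : Disjoint A B := by
      rw [Set.disjoint_left]
      rintro z ⟨_, h1⟩ ⟨_, h2⟩
      rcases h1 with h1 | h1 <;> rcases h2 with h2 | h2 <;>
        rw [h1] at h2
      · exact hnab h2.le
      · exact absurd h2 haw.ne
      · exact hnvb (h2.le)
      · exact hnvw h2.le
    have hVWd : Disjoint V W := by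
      rw [Set.disjoint_left]
      rintro z ⟨_, h1⟩ ⟨_, h2⟩
      rcases h1 with h1 | h1 <;> rcases h2 with h2 | h2 <;>
        rw [h1] at h2
      · exact hnvw h2.le
      · exact hnvb h2.le
      · exact absurd h2 haw.ne
      · exact hnab h2.le
    refine ⟨A, B, V, W, ?_, ?_, ?_, ?_, ?_, hABd, ?_, hVWd, ?_⟩
    · -- A nonempty
      obtain ⟨x, hx⟩ := hsurj a
      obtain ⟨z, hzmin, hzx⟩ := exists_isMin_le x
      have hle : f z ≤ a := hx ▸ hf hzx
      rcases hcarrier (f z) with h | h | h | h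
      · exact ⟨z, hzmin, Or.inl h⟩
      · exact absurd (h ▸ hle) hnba
      · exact absurd (h ▸ hle) hnva
      · exact absurd (h ▸ hle) hnwa
    · -- B nonempty
      obtain ⟨x, hx⟩ := hsurj b
      obtain ⟨z, hzmin, hzx⟩ := exists_isMin_le x
      have hle : f z ≤ b := hx ▸ hf hzx
      rcases hcarrier (f z) with h | h | h | h
      · exact absurd (h ▸ hle) hnab
      · exact ⟨z, hzmin, Or.inl h⟩
      · exact absurd (h ▸ hle) hnvb
      · exact absurd (h ▸ hle) hnwb
    · -- V nonempty
      obtain ⟨x, hx⟩ := hsurj v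
      obtain ⟨z, hzmax, hxz⟩ := exists_le_isMax x
      have hle : v ≤ f z := hx ▸ hf hxz
      rcases hcarrier (f z) with h | h | h | h
      · exact absurd (h ▸ hle) hnva
      · exact absurd (h ▸ hle) hnvb
      · exact ⟨z, hzmax, Or.inl h⟩
      · exact absurd (h ▸ hle) hnvw
    · -- W nonempty
      obtain ⟨x, hx⟩ := hsurj w
      obtain ⟨z, hzmax, hxz⟩ := exists_le_isMax x
      have hle : w ≤ f z := hx ▸ hf hxz
      rcases hcarrier (f z) with h | h | h | h
      · exact absurd (h ▸ hle) hnwa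
      · exact absurd (h ▸ hle) hnwb
      · exact absurd (h ▸ hle) hnwv
      · exact ⟨z, hzmax, Or.inl h⟩
    · -- A ∪ B = minimals
      ext z
      simp only [Set.mem_union, Set.mem_setOf_eq]
      constructor
      · rintro (⟨h, _⟩ | ⟨h, _⟩) <;> exact h
      · intro h
        rcases hcarrier (f z) with e | e | e | e
        · exact Or.inl ⟨h, Or.inl e⟩
        · exact Or.inr ⟨h, Or.inl e⟩
        · exact Or.inl ⟨h, Or.inr e⟩
        · exact Or.inr ⟨h, Or.inr e⟩
    · -- V ∪ W = maximals
      ext z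
      simp only [Set.mem_union, Set.mem_setOf_eq]
      constructor
      · rintro (⟨h, _⟩ | ⟨h, _⟩) <;> exact h
      · intro h
        rcases hcarrier (f z) with e | e | e | e
        · exact Or.inl ⟨h, Or.inr e⟩
        · exact Or.inr ⟨h, Or.inr e⟩
        · exact Or.inl ⟨h, Or.inl e⟩
        · exact Or.inr ⟨h, Or.inl e⟩
    · -- no improper crown meeting all four
      rintro F hFE hF4 hFA hFB hFV hFW ⟨a', b', v', w', hFeq, himp⟩
      obtain ⟨ha'min, hb'min, ha'b', hv'max, hw'max, hv'w',
        hav', haw', hbv', hbw', m, ham, hbm, hmv, hmw⟩ := himp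
      subst hFeq
      have contra : ∀ p q r s : α, p ∈ A → q ∈ B → r ∈ V → s ∈ W →
          p < m → q < m → m < r → m < s → False := by
        intro p q r s hp hq hr hs hpm hqm hmr hms
        have h1 : f p ≤ f m := hf hpm.le
        have h2 : f q ≤ f m := hf hqm.le
        have h3 : f m ≤ f r := hf hmr.le
        have h4 : f m ≤ f s := hf hms.le
        rcases hcarrier (f m) with e | e | e | e
        · rw [e] at h2
          rcases hq.2 with h | h <;> rw [h] at h2
          · exact hnba h2
          · exact hnwa h2
        · rw [e] at h1
          rcases hp.2 with h | h <;> rw [h] at h1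
          · exact hnab h1
          · exact hnvb h1
        · rw [e] at h4
          rcases hs.2 with h | h <;> rw [h] at h4
          · exact hnvw h4
          · exact hnvb h4
        · rw [e] at h3
          rcases hr.2 with h | h <;> rw [h] at h3
          · exact hnwv h3
          · exact hnwa h3
      have hv'nmin : ¬ IsMin v' := fun h => absurd (hav'.trans_le (h hav'.le)) (lt_irrefl a')
      have hw'nmin : ¬ IsMin w' := fun h => absurd (haw'.trans_le (h haw'.le)) (lt_irrefl a')
      have ha'nmax : ¬ IsMax a' := fun h => absurd ((h hav'.le).trans_lt hav') (lt_irrefl v')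
      have hb'nmax : ¬ IsMax b' := fun h => absurd ((h hbv'.le).trans_lt hbv') (lt_irrefl v')
      obtain ⟨xA, hxAF, hxA⟩ := hFA
      obtain ⟨xB, hxBF, hxB⟩ := hFB
      obtain ⟨xV, hxVF, hxV⟩ := hFV
      obtain ⟨xW, hxWF, hxW⟩ := hFW
      have hxAab : xA = a' ∨ xA = b' := by
        simp only [Set.mem_insert_iff, Set.mem_singleton_iff] at hxAF
        rcases hxAF with rfl | rfl | rfl | rfl
        · exact Or.inl rfl
        · exact Or.inr rfl
        · exact absurd hxA.1 hv'nmin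
        · exact absurd hxA.1 hw'nmin
      have hxBab : xB = a' ∨ xB = b' := by
        simp only [Set.mem_insert_iff, Set.mem_singleton_iff] at hxBF
        rcases hxBF with rfl | rfl | rfl | rfl
        · exact Or.inl rfl
        · exact Or.inr rfl
        · exact absurd hxB.1 hv'nmin
        · exact absurd hxB.1 hw'nmin
      have hxVvw : xV = v' ∨ xV = w' := by
        simp only [Set.mem_insert_iff, Set.mem_singleton_iff] at hxVF
        rcases hxVF with rfl | rfl | rfl | rfl
        · exact absurd hxV.1 ha'nmax
        · exact absurd hxV.1 hb'nmax
        · exact Or.inl rfl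
        · exact Or.inr rfl
      have hxWvw : xW = v' ∨ xW = w' := by
        simp only [Set.mem_insert_iff, Set.mem_singleton_iff] at hxWF
        rcases hxWF with rfl | rfl | rfl | rfl
        · exact absurd hxW.1 ha'nmax
        · exact absurd hxW.1 hb'nmax
        · exact Or.inl rfl
        · exact Or.inr rfl
      have hxAB : xA ≠ xB := fun h => Set.disjoint_left.mp hABd hxA (h ▸ hxB)
      have hxVW : xV ≠ xW := fun h => Set.disjoint_left.mp hVWd hxV (h ▸ hxW)
      rcases hxAab with rfl | rfl <;> rcases hxBab with rfl | rfl <;>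
        rcases hxVvw with rfl | rfl <;> rcases hxWvw with rfl | rfl
      · exact hxAB rfl
      · exact hxAB rfl
      · exact hxAB rfl
      · exact hxAB rfl
      · exact hxVW rfl
      · exact contra _ _ _ _ hxA hxB hxV hxW ham hbm hmv hmw
      · exact contra _ _ _ _ hxA hxB hxV hxW ham hbm hmw hmv
      · exact hxVW rfl
      · exact hxVW rfl
      · exact contra _ _ _ _ hxA hxB hxV hxW hbm ham hmv hmw
      · exact contra _ _ _ _ hxA hxB hxV hxW hbm ham hmw hmv
      · exact hxVW rfl
      · exact hxAB rfl
      · exact hxAB rfl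
      · exact hxAB rfl
      · exact hxAB rfl
  · -- reverse direction
    rintro ⟨A, B, V, W, hAne, hBne, hVne, hWne, hABu, hABd, hVWu, hVWd, hnoc⟩
    have hAmin : ∀ z ∈ A, IsMin z := fun z hz => by
      have h : z ∈ A ∪ B := Or.inl hz
      rw [hABu] at h; exact h
    have hBmin : ∀ z ∈ B, IsMin z := fun z hz => by
      have h : z ∈ A ∪ B := Or.inr hz
      rw [hABu] at h; exact h
    have hVmax : ∀ z ∈ V, IsMax z := fun z hz => by
      have h : z ∈ V ∪ W := Or.inl hz
      rw [hVWu] at h; exact h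
    have hWmax : ∀ z ∈ W, IsMax z := fun z hz => by
      have h : z ∈ V ∪ W := Or.inr hz
      rw [hVWu] at h; exact h
    set PA : α → Prop := fun x => ∃ p ∈ A, p ≤ x with hPAdef
    set PB : α → Prop := fun x => ∃ p ∈ B, p ≤ x with hPBdef
    set PV : α → Prop := fun x => ∃ p ∈ V, x ≤ p with hPVdef
    set PW : α → Prop := fun x => ∃ p ∈ W, x ≤ p with hPWdef
    have hPAup : ∀ {x y : α}, x ≤ y → PA x → PA y :=
      fun hxy ⟨p, hp, hpx⟩ => ⟨p, hp, hpx.trans hxy⟩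
    have hPBup : ∀ {x y : α}, x ≤ y → PB x → PB y :=
      fun hxy ⟨p, hp, hpx⟩ => ⟨p, hp, hpx.trans hxy⟩
    have hPVdown : ∀ {x y : α}, x ≤ y → PV y → PV x :=
      fun hxy ⟨p, hp, hyp⟩ => ⟨p, hp, hxy.trans hyp⟩
    have hPWdown : ∀ {x y : α}, x ≤ y → PW y → PW x :=
      fun hxy ⟨p, hp, hyp⟩ => ⟨p, hp, hxy.trans hyp⟩
    have hcov1 : ∀ x : α, PA x ∨ PB x := by
      intro x
      obtain ⟨z, hzmin, hzx⟩ := exists_isMin_le x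
      have h : z ∈ A ∪ B := by rw [hABu]; exact hzmin
      rcases h with h | h
      · exact Or.inl ⟨z, h, hzx⟩
      · exact Or.inr ⟨z, h, hzx⟩
    have hcov2 : ∀ x : α, PV x ∨ PW x := by
      intro x
      obtain ⟨z, hzmax, hxz⟩ := exists_le_isMax x
      have h : z ∈ V ∪ W := by rw [hVWu]; exact hzmax
      rcases h with h | h
      · exact Or.inl ⟨z, h, hxz⟩
      · exact Or.inr ⟨z, h, hxz⟩
    have key : ∀ x : α, PA x → PB x → PV x → PW x → False := by
      rintro x ⟨p, hpA, hpx⟩ ⟨q, hqB, hqx⟩ ⟨r, hrV, hxr⟩ ⟨s, hsW, hxs⟩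
      have hpmin := hAmin p hpA
      have hqmin := hBmin q hqB
      have hrmax := hVmax r hrV
      have hsmax := hWmax s hsW
      have hpq : p ≠ q := fun h => Set.disjoint_left.mp hABd hpA (h ▸ hqB)
      have hrs : r ≠ s := fun h => Set.disjoint_left.mp hVWd hrV (h ▸ hsW)
      have hpx' : p < x := hpx.lt_of_ne (by
        rintro rfl; exact hpq (le_antisymm (hpmin hqx) hqx))
      have hqx' : q < x := hqx.lt_of_ne (by
        rintro rfl; exact hpq (le_antisymm hpx (hqmin hpx)))
      have hxr' : x < r := hxr.lt_of_ne (by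
        rintro rfl; exact hrs (le_antisymm hxs (hrmax hxs)))
      have hxs' : x < s := hxs.lt_of_ne (by
        rintro rfl; exact hrs (le_antisymm (hsmax hxr) hxr))
      have hpr : p < r := hpx'.trans hxr'
      have hps : p < s := hpx'.trans hxs'
      have hqr : q < r := hqx'.trans hxr'
      have hqs : q < s := hqx'.trans hxs'
      refine hnoc {p, q, r, s} ?_ (ncard_four p q r s hpq hpr.ne hps.ne hqr.ne hqs.ne hrs)
        ⟨p, by simp, hpA⟩ ⟨q, by simp, hqB⟩ ⟨r, by simp, hrV⟩ ⟨s, by simp, hsW⟩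
        ⟨p, q, r, s, rfl, hpmin, hqmin, hpq, hrmax, hsmax, hrs,
          hpr, hps, hqr, hqs, x, hpx', hqx', hxr', hxs'⟩
      rintro z hz
      simp only [Set.mem_insert_iff, Set.mem_singleton_iff] at hz
      rcases hz with rfl | rfl | rfl | rfl
      exacts [Or.inl hpmin, Or.inl hqmin, Or.inr hrmax, Or.inr hsmax]
    set f : α → γ := fun x =>
      if PA x ∧ PB x then (if PV x then v else w)
      else if IsMax x then (if PV x then v else w)
      else if PA x then a else b with hfdef
    have h_top : ∀ x, PA x ∧ PB x → PV x → f x = v := by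
      intro x h1 h2; simp only [hfdef]; rw [if_pos h1, if_pos h2]
    have h_top' : ∀ x, PA x ∧ PB x → ¬ PV x → f x = w := by
      intro x h1 h2; simp only [hfdef]; rw [if_pos h1, if_neg h2]
    have h_max : ∀ x, ¬ (PA x ∧ PB x) → IsMax x → PV x → f x = v := by
      intro x h1 h2 h3; simp only [hfdef]; rw [if_neg h1, if_pos h2, if_pos h3]
    have h_max' : ∀ x, ¬ (PA x ∧ PB x) → IsMax x → ¬ PV x → f x = w := by
      intro x h1 h2 h3; simp only [hfdef]; rw [if_neg h1, if_pos h2, if_neg h3]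
    have h_a : ∀ x, ¬ (PA x ∧ PB x) → ¬ IsMax x → PA x → f x = a := by
      intro x h1 h2 h3; simp only [hfdef]; rw [if_neg h1, if_neg h2, if_pos h3]
    have h_b : ∀ x, ¬ (PA x ∧ PB x) → ¬ IsMax x → ¬ PA x → f x = b := by
      intro x h1 h2 h3; simp only [hfdef]; rw [if_neg h1, if_neg h2, if_neg h3]
    refine ⟨f, ?_, ?_⟩
    · -- monotone
      intro x y hxy
      by_cases hmx : IsMax x
      · have hxyeq : x = y := le_antisymm hxy (hmx hxy)
        subst hxyeq; exact le_refl _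
      by_cases hAx : PA x
      · by_cases hBx : PB x
        · have hAy := hPAup hxy hAx
          have hBy := hPBup hxy hBx
          by_cases hVx : PV x
          · have hWx : ¬ PW x := fun h => key x hAx hBx hVx h
            have hWy : ¬ PW y := fun h => hWx (hPWdown hxy h)
            have hVy : PV y := (hcov2 y).resolve_right hWy
            rw [h_top x ⟨hAx, hBx⟩ hVx, h_top y ⟨hAy, hBy⟩ hVy]
          · have hVy : ¬ PV y := fun h => hVx (hPVdown hxy h)
            rw [h_top' x ⟨hAx, hBx⟩ hVx, h_top' y ⟨hAy, hBy⟩ hVy]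
        · rw [h_a x (fun h => hBx h.2) hmx hAx]
          have hAy := hPAup hxy hAx
          by_cases hBy : PB y
          · by_cases hVy : PV y
            · rw [h_top y ⟨hAy, hBy⟩ hVy]; exact hav.le
            · rw [h_top' y ⟨hAy, hBy⟩ hVy]; exact haw.le
          · by_cases hmy : IsMax y
            · by_cases hVy : PV y
              · rw [h_max y (fun h => hBy h.2) hmy hVy]; exact hav.le
              · rw [h_max' y (fun h => hBy h.2) hmy hVy]; exact haw.le
            · rw [h_a y (fun h => hBy h.2) hmy hAy]
      · rw [h_b x (fun h => hAx h.1) hmx hAx]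
        have hBx : PB x := (hcov1 x).resolve_left hAx
        have hBy := hPBup hxy hBx
        by_cases hAy : PA y
        · by_cases hVy : PV y
          · rw [h_top y ⟨hAy, hBy⟩ hVy]; exact hbv.le
          · rw [h_top' y ⟨hAy, hBy⟩ hVy]; exact hbw.le
        · by_cases hmy : IsMax y
          · by_cases hVy : PV y
            · rw [h_max y (fun h => hAy h.1) hmy hVy]; exact hbv.le
            · rw [h_max' y (fun h => hAy h.1) hmy hVy]; exact hbw.le
          · rw [h_b y (fun h => hAy h.1) hmy hAy]
    · -- surjective
      intro z
      rcases hcarrier z with rfl | rfl | rfl | rfl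
      · obtain ⟨p, hpA⟩ := hAne
        have hpmin := hAmin p hpA
        have hpnmax : ¬ IsMax p := fun h => no_isolated hconn htwo hpmin h
        have hPBp : ¬ PB p := by
          rintro ⟨q, hqB, hqp⟩
          exact Set.disjoint_left.mp hABd hpA ((le_antisymm hqp (hpmin hqp)) ▸ hqB)
        exact ⟨p, h_a p (fun h => hPBp h.2) hpnmax ⟨p, hpA, le_refl p⟩⟩
      · obtain ⟨q, hqB⟩ := hBne
        have hqmin := hBmin q hqB
        have hqnmax : ¬ IsMax q := fun h => no_isolated hconn htwo hqmin h
        have hPAq : ¬ PA q := by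
          rintro ⟨p, hpA, hpq⟩
          exact Set.disjoint_left.mp hABd ((le_antisymm hpq (hqmin hpq)) ▸ hpA) hqB
        exact ⟨q, h_b q (fun h => hPAq h.1) hqnmax hPAq⟩
      · obtain ⟨r, hrV⟩ := hVne
        have hrmax := hVmax r hrV
        have hPVr : PV r := ⟨r, hrV, le_refl r⟩
        by_cases h : PA r ∧ PB r
        · exact ⟨r, h_top r h hPVr⟩
        · exact ⟨r, h_max r h hrmax hPVr⟩
      · obtain ⟨s, hsW⟩ := hWne
        have hsmax := hWmax s hsW
        have hPVs : ¬ PV s := by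
          rintro ⟨r, hrV, hsr⟩
          exact Set.disjoint_left.mp hVWd ((le_antisymm (hsmax hsr) hsr) ▸ hrV) hsW
        by_cases h : PA s ∧ PB s
        · exact ⟨s, h_top' s h hPVs⟩
        · exact ⟨s, h_max' s h hsmax hPVs⟩
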